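/- Let $J \in \mathbb{R}^{n\times p}$, $\alpha \in \mathbb{R}^n$ in the column space of $J$, and $\lambda > 0$. Let $\mu_{\min}$ denote the smallest nonzero eigenvalue of $\frac{1}{n}JJ^\top$ (assume $J \ne 0$). Suppose for each eigenvalue $\mu_i$ of $\frac{1}{n}JJ^\top$ with orthonormal eigenvector basis, the quantities $\tilde g_i$ (components of $g = \frac{1}{n}J^\top \alpha$ in the corresponding eigenbasis of $\frac{1}{n}J^\top J$) satisfy $\tilde g_i^2 \le C_3 \mu_i^{1+\varepsilon}$ for constants $C_3 > 0$, $0 < \varepsilon < 1$. Then $o_\lambda := \frac{1}{n}\alpha^\top(\frac{1}{n}JJ^\top + \lambda I_n)^{-1}\alpha \le \frac{C_3 n}{\mu_{\min}^{1-\varepsilon}}$. -/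

import Mathlib

open Matrix Finset

/-- Bound `o_λ = (1/n)αᵀ((1/n)JJᵀ + λI)⁻¹α ≤ C₃ n / μ_min^{1-ε}` for `α` in the column
space of `J`, under the decay bound on the eigen-components of `g = (1/n)Jᵀα`. -/
theorem stmt_12 {n p : ℕ} (hn : 0 < n) (J : Matrix (Fin n) (Fin p) ℝ) (hJ : J ≠ 0)
    (α : Fin n → ℝ) (β : Fin p → ℝ) (hα : α = J.mulVec β)
    (lam : ℝ) (hlam : 0 < lam)
    -- SVD of `J`
    (U : Matrix (Fin n) (Fin n) ℝ) (V : Matrix (Fin p) (Fin p) ℝ)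
    (hU : U ∈ Matrix.orthogonalGroup (Fin n) ℝ)
    (hV : V ∈ Matrix.orthogonalGroup (Fin p) ℝ)
    (σ : ℕ → ℝ) (hσnonneg : ∀ i, 0 ≤ σ i)
    (hσzero : ∀ i : ℕ, min n p ≤ i → σ i = 0)
    (Sig : Matrix (Fin n) (Fin p) ℝ)
    (hSig : ∀ i j, Sig i j = if (i : ℕ) = (j : ℕ) then σ i else 0)
    (hSVD : J = U * Sig * Vᵀ)
    -- eigenvalues of `(1/n)JJᵀ`
    (μ : Fin n → ℝ) (hμ : ∀ i : Fin n, μ i = σ (i : ℕ) ^ 2 / n)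
    -- smallest nonzero eigenvalue
    (μmin : ℝ) (hmem : ∃ i : Fin n, μ i = μmin ∧ μ i ≠ 0)
    (hmin : ∀ i : Fin n, μ i ≠ 0 → μmin ≤ μ i)
    -- components of `g = (1/n)Jᵀα` in the eigenbasis of `(1/n)JᵀJ`
    (g : Fin p → ℝ) (hg : g = (n : ℝ)⁻¹ • Jᵀ.mulVec α)
    (C₃ ε : ℝ) (hC₃ : 0 < C₃) (hε0 : 0 < ε) (hε1 : ε < 1)
    (hgbound : ∀ i : Fin n, ∀ h : (i : ℕ) < p,
      (Vᵀ.mulVec g ⟨(i : ℕ), h⟩) ^ 2 ≤ C₃ * (μ i) ^ ((1 : ℝ) + ε)) :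
    (n : ℝ)⁻¹ *
        (α ⬝ᵥ (((n : ℝ)⁻¹ • (J * Jᵀ) +
          lam • (1 : Matrix (Fin n) (Fin n) ℝ))⁻¹).mulVec α)
      ≤ C₃ * n / μmin ^ ((1 : ℝ) - ε) := by
  have hn' : (0 : ℝ) < n := by exact_mod_cast hn
  -- orthogonality facts
  have hstarU : star U = Uᵀ := by
    ext i j; simp [Matrix.star_apply]
  have hstarV : star V = Vᵀ := by
    ext i j; simp [Matrix.star_apply]
  have hUUt : U * Uᵀ = 1 := by
    have := (Matrix.mem_orthogonalGroup_iff (Fin n) ℝ).mp hU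
    exact this
  have hUtU : Uᵀ * U = 1 := by
    have := (Matrix.mem_orthogonalGroup_iff' (Fin n) ℝ).mp hU
    exact this
  have hVtV : Vᵀ * V = 1 := by
    have := (Matrix.mem_orthogonalGroup_iff' (Fin p) ℝ).mp hV
    exact this
  -- nonnegativity / positivity of eigenvalues
  have hμnonneg : ∀ i : Fin n, 0 ≤ μ i := fun i => by
    rw [hμ]; positivity
  have hμmin : 0 < μmin := by
    obtain ⟨i, hi, hine⟩ := hmem
    rcases lt_of_le_of_ne (hμnonneg i) (Ne.symm hine) with h
    linarith [hi ▸ h]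
  -- Σ Σᵀ is diagonal
  have hSS : Sig * Sigᵀ = Matrix.diagonal (fun i : Fin n => σ (i : ℕ) ^ 2) := by
    ext i j
    rw [Matrix.mul_apply, Matrix.diagonal_apply]
    rcases eq_or_ne i j with rfl | hij
    · simp only [if_pos rfl]
      by_cases hp : (i : ℕ) < p
      · rw [Finset.sum_eq_single (⟨(i : ℕ), hp⟩ : Fin p)]
        · simp [hSig, sq]
        · intro b _ hb
          have : (i : ℕ) ≠ (b : ℕ) := fun h => hb (by
            apply Fin.ext; simpa using h.symm)
          simp [hSig, Matrix.transpose_apply, this]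
        · simp
      · have h0 : σ (i : ℕ) = 0 := hσzero _ (le_trans (min_le_right _ _) (le_of_not_gt hp))
        simp [hSig, Matrix.transpose_apply, h0]
    · rw [if_neg hij]
      apply Finset.sum_eq_zero
      intro k _
      rcases eq_or_ne ((i : ℕ)) ((k : ℕ)) with h | h
      · have : (j : ℕ) ≠ (k : ℕ) := fun hc => hij (Fin.ext (h.trans hc.symm))
        simp [hSig, Matrix.transpose_apply, this]
      · simp [hSig, h]
  -- J Jᵀ
  have hJJ : J * Jᵀ = U * Matrix.diagonal (fun i : Fin n => σ (i : ℕ) ^ 2) * Uᵀ := by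
    rw [hSVD]
    rw [Matrix.transpose_mul, Matrix.transpose_mul, Matrix.transpose_transpose]
    calc U * Sig * Vᵀ * (V * (Sigᵀ * Uᵀ))
        = U * (Sig * ((Vᵀ * V) * (Sigᵀ * Uᵀ))) := by
          simp only [Matrix.mul_assoc]
      _ = U * (Sig * Sigᵀ * Uᵀ) := by
          rw [hVtV, Matrix.one_mul, Matrix.mul_assoc]
      _ = _ := by rw [hSS, Matrix.mul_assoc]
  -- the regularized matrix in diagonal form
  set D : Matrix (Fin n) (Fin n) ℝ := Matrix.diagonal (fun i => μ i + lam) with hD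
  set E : Matrix (Fin n) (Fin n) ℝ := Matrix.diagonal (fun i => (μ i + lam)⁻¹) with hE
  have hM : (n : ℝ)⁻¹ • (J * Jᵀ) + lam • (1 : Matrix (Fin n) (Fin n) ℝ) = U * D * Uᵀ := by
    have h1 : (1 : Matrix (Fin n) (Fin n) ℝ) = U * 1 * Uᵀ := by
      rw [Matrix.mul_one, hUUt]
    rw [hJJ]
    rw [hD]
    have hDsplit : Matrix.diagonal (fun i : Fin n => μ i + lam)
        = (n : ℝ)⁻¹ • Matrix.diagonal (fun i : Fin n => σ (i : ℕ) ^ 2)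
          + lam • (1 : Matrix (Fin n) (Fin n) ℝ) := by
      ext i j
      rcases eq_or_ne i j with rfl | hij
      · simp [Matrix.diagonal_apply_eq, Matrix.one_apply_eq, hμ, div_eq_inv_mul]
      · simp [Matrix.diagonal_apply_ne _ hij, Matrix.one_apply_ne hij]
    rw [hDsplit, Matrix.mul_add, Matrix.add_mul]
    congr 1
    · rw [Matrix.mul_smul, Matrix.smul_mul]
    · rw [Matrix.mul_smul, Matrix.smul_mul, Matrix.mul_one, hUUt]
  have hμlam : ∀ i : Fin n, 0 < μ i + lam := fun i =>
    add_pos_of_nonneg_of_pos (hμnonneg i) hlam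
  have hDE : D * E = 1 := by
    rw [hD, hE, Matrix.diagonal_mul_diagonal]
    ext i j
    rcases eq_or_ne i j with rfl | hij
    · simp [mul_inv_cancel₀ (hμlam i).ne']
    · simp [Matrix.diagonal_apply_ne _ hij, Matrix.one_apply_ne hij]
  have hinv : (U * D * Uᵀ)⁻¹ = U * E * Uᵀ := by
    apply Matrix.inv_eq_right_inv
    calc U * D * Uᵀ * (U * E * Uᵀ) = U * (D * ((Uᵀ * U) * (E * Uᵀ))) := by
          simp only [Matrix.mul_assoc]
      _ = U * (D * E * Uᵀ) := by rw [hUtU, Matrix.one_mul, Matrix.mul_assoc]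
      _ = 1 := by rw [hDE, Matrix.one_mul, hUUt]
  -- components
  set w : Fin n → ℝ := Uᵀ.mulVec α with hw
  have hwformula : ∀ i : Fin n,
      w i = if h : (i : ℕ) < p then σ (i : ℕ) * Vᵀ.mulVec β ⟨(i : ℕ), h⟩ else 0 := by
    intro i
    have : w = Sig.mulVec (Vᵀ.mulVec β) := by
      rw [hw, hα, hSVD, Matrix.mulVec_mulVec]
      have h2 : Uᵀ * (U * Sig * Vᵀ) = Sig * Vᵀ := by
        rw [← Matrix.mul_assoc, ← Matrix.mul_assoc, hUtU, Matrix.one_mul]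
      rw [h2, ← Matrix.mulVec_mulVec]
    rw [this, Matrix.mulVec, dotProduct]
    by_cases hp : (i : ℕ) < p
    · rw [dif_pos hp, Finset.sum_eq_single (⟨(i : ℕ), hp⟩ : Fin p)]
      · simp [hSig]
      · intro k _ hk
        have : (i : ℕ) ≠ (k : ℕ) := fun h => hk (by apply Fin.ext; simpa using h.symm)
        simp [hSig, this]
      · simp
    · rw [dif_neg hp]
      apply Finset.sum_eq_zero
      intro k _
      have : (i : ℕ) ≠ (k : ℕ) := fun h => hp (h ▸ k.isLt)
      simp [hSig, this]
  have hgformula : ∀ (i : Fin n) (h : (i : ℕ) < p),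
      Vᵀ.mulVec g ⟨(i : ℕ), h⟩ = (n : ℝ)⁻¹ * (σ (i : ℕ) * w i) := by
    intro i h
    have hVg : Vᵀ.mulVec g = (n : ℝ)⁻¹ • Sigᵀ.mulVec w := by
      rw [hg, hw, hSVD, Matrix.mulVec_smul]
      congr 1
      rw [Matrix.transpose_mul, Matrix.transpose_mul, Matrix.transpose_transpose,
        Matrix.mulVec_mulVec]
      have h2 : Vᵀ * (V * (Sigᵀ * Uᵀ)) = Sigᵀ * Uᵀ := by
        rw [← Matrix.mul_assoc, hVtV, Matrix.one_mul]
      rw [h2, ← Matrix.mulVec_mulVec]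
    rw [hVg]
    simp only [Pi.smul_apply, smul_eq_mul]
    congr 1
    rw [Matrix.mulVec, dotProduct]
    rw [Finset.sum_eq_single i]
    · simp [hSig]
    · intro k _ hk
      have : (k : ℕ) ≠ (i : ℕ) := fun hc => hk (Fin.ext hc)
      simp [hSig, Matrix.transpose_apply, this]
    · simp
  -- quadratic form
  have hform : α ⬝ᵥ (U * E * Uᵀ).mulVec α = ∑ i : Fin n, (μ i + lam)⁻¹ * w i ^ 2 := by
    have h1 : (U * E * Uᵀ).mulVec α = U.mulVec (E.mulVec w) := by
      rw [hw, Matrix.mulVec_mulVec, Matrix.mulVec_mulVec]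
    rw [h1, Matrix.dotProduct_mulVec, ← Matrix.mulVec_transpose, ← hw]
    rw [dotProduct]
    apply Finset.sum_congr rfl
    intro i _
    rw [Matrix.mulVec_diagonal]
    ring
  -- per-term bound
  set B : ℝ := (n : ℝ) * C₃ * (μmin ^ ((1 : ℝ) - ε))⁻¹ with hB
  have hBpos : 0 < B := by
    rw [hB]
    have := Real.rpow_pos_of_pos hμmin ((1 : ℝ) - ε)
    positivity
  have hterm : ∀ i : Fin n, (μ i + lam)⁻¹ * w i ^ 2 ≤ B := by
    intro i
    by_cases hμi : μ i = 0
    · have hσi : σ (i : ℕ) = 0 := by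
        have := hμ i
        rw [hμi] at this
        have h2 : σ (i : ℕ) ^ 2 = 0 := by
          field_simp at this
          simpa using this.symm
        exact pow_eq_zero_iff (by norm_num) |>.mp h2
      have : w i = 0 := by
        rw [hwformula i]
        split <;> simp [hσi]
      rw [this]
      simpa using hBpos.le
    · -- μ i > 0, hence σ i ≠ 0 and i < min n p ≤ p
      have hμipos : 0 < μ i := lt_of_le_of_ne (hμnonneg i) (Ne.symm hμi)
      have hσi : σ (i : ℕ) ≠ 0 := by
        intro h0
        apply hμi
        rw [hμ, h0]; simp
      have hip : (i : ℕ) < p := by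
        by_contra hc
        exact hσi (hσzero _ (le_trans (min_le_right _ _) (le_of_not_gt hc)))
      set v : ℝ := Vᵀ.mulVec β ⟨(i : ℕ), hip⟩ with hv
      have hwi : w i = σ (i : ℕ) * v := by rw [hwformula i, dif_pos hip]
      have hσ2 : σ (i : ℕ) ^ 2 = (n : ℝ) * μ i := by
        rw [hμ]; field_simp
      have hgi : Vᵀ.mulVec g ⟨(i : ℕ), hip⟩ = μ i * v := by
        rw [hgformula i hip, hwi, hμ]
        field_simp
      -- from the decay bound: v² ≤ C₃ * (μ i)^(ε-1)
      have hv2 : μ i ^ (2 : ℕ) * v ^ 2 ≤ C₃ * μ i ^ ((1 : ℝ) + ε) := by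
        have := hgbound i hip
        rw [hgi, mul_pow] at this
        exact this
      have hrw : μ i ^ ((1 : ℝ) + ε) = μ i ^ (2 : ℕ) * μ i ^ (ε - (1 : ℝ)) := by
        rw [← Real.rpow_natCast (μ i) 2, ← Real.rpow_add hμipos]
        congr 1
        push_cast
        ring
      have hv2' : v ^ 2 ≤ C₃ * μ i ^ (ε - (1 : ℝ)) := by
        rw [hrw] at hv2
        have hμ2 : (0 : ℝ) < μ i ^ (2 : ℕ) := by positivity
        calc v ^ 2 = (μ i ^ (2 : ℕ) * v ^ 2) / μ i ^ (2 : ℕ) := by field_simp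
          _ ≤ (C₃ * (μ i ^ (2 : ℕ) * μ i ^ (ε - (1 : ℝ)))) / μ i ^ (2 : ℕ) := by
              gcongr
          _ = C₃ * μ i ^ (ε - (1 : ℝ)) := by field_simp
      -- antitonicity in the base (negative exponent)
      have hmono : μ i ^ (ε - (1 : ℝ)) ≤ μmin ^ (ε - (1 : ℝ)) :=
        Real.rpow_le_rpow_of_nonpos hμmin (hmin i hμi) (by linarith)
      have hμminrw : μmin ^ (ε - (1 : ℝ)) = (μmin ^ ((1 : ℝ) - ε))⁻¹ := by
        rw [← Real.rpow_neg hμmin.le]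
        norm_num
      -- assemble
      have hw2 : w i ^ 2 = (n : ℝ) * μ i * v ^ 2 := by
        rw [hwi, mul_pow, hσ2]
      have hchain : (μ i + lam)⁻¹ * w i ^ 2 ≤ (n : ℝ) * v ^ 2 := by
        rw [hw2]
        have h1 : (μ i + lam)⁻¹ ≤ (μ i)⁻¹ := by
          apply inv_anti₀ hμipos
          linarith
        have h2 : (0 : ℝ) ≤ (n : ℝ) * μ i * v ^ 2 := by positivity
        calc (μ i + lam)⁻¹ * ((n : ℝ) * μ i * v ^ 2)
            ≤ (μ i)⁻¹ * ((n : ℝ) * μ i * v ^ 2) := by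
              apply mul_le_mul_of_nonneg_right h1 h2
          _ = (n : ℝ) * v ^ 2 := by field_simp
      calc (μ i + lam)⁻¹ * w i ^ 2 ≤ (n : ℝ) * v ^ 2 := hchain
        _ ≤ (n : ℝ) * (C₃ * μ i ^ (ε - (1 : ℝ))) := by
            apply mul_le_mul_of_nonneg_left hv2' (by positivity)
        _ ≤ (n : ℝ) * (C₃ * μmin ^ (ε - (1 : ℝ))) := by
            apply mul_le_mul_of_nonneg_left ?_ (by positivity)
            exact mul_le_mul_of_nonneg_left hmono hC₃.le
        _ = B := by rw [hB, hμminrw]; ring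
  -- final assembly
  rw [hM, hinv, hform]
  have hsum : ∑ i : Fin n, (μ i + lam)⁻¹ * w i ^ 2 ≤ (n : ℝ) * B := by
    calc ∑ i : Fin n, (μ i + lam)⁻¹ * w i ^ 2 ≤ ∑ _i : Fin n, B :=
          Finset.sum_le_sum fun i _ => hterm i
      _ = (n : ℝ) * B := by simp [mul_comm]
  have hfin : (n : ℝ)⁻¹ * ((n : ℝ) * B) = C₃ * n / μmin ^ ((1 : ℝ) - ε) := by
    rw [hB]
    field_simp
  calc (n : ℝ)⁻¹ * ∑ i : Fin n, (μ i + lam)⁻¹ * w i ^ 2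
      ≤ (n : ℝ)⁻¹ * ((n : ℝ) * B) := by
        apply mul_le_mul_of_nonneg_left hsum (by positivity)
    _ = C₃ * n / μmin ^ ((1 : ℝ) - ε) := hfin
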